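/- arXiv:1403.0235 — 2 statements merged into one kernel-verified Lean document; each statement's English description precedes it below -/
import Mathlib

section
/- Let f(r) = r·sin(log r) + 6r for r ≥ 1. Then f'(r)·r − f(r) = r·cos(log r), and there exists a sequence r_k → ∞ (namely r_k = e^{2πk}) with |f'(r_k)·r_k − f(r_k)| = r_k. Hence the support function ⟨x₀,ν⟩ = (f'(r)r − f(r))/√(1+f'(r)²) of the associated surface of revolution satisfies ⟨x₀,ν⟩(r_k,θ)² ≥ γ·r_k² for some γ > 0, so ⟨x₀,ν⟩² is not o(|x₀|²). -/
open Real Filter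

theorem example_support_function_growth :
    let f : ℝ → ℝ := fun r => r * Real.sin (Real.log r) + 6 * r
    let f' : ℝ → ℝ := fun r => Real.sin (Real.log r) + Real.cos (Real.log r) + 6
    let rk : ℕ → ℝ := fun k => Real.exp (2 * Real.pi * k)
    (∀ r : ℝ, 1 ≤ r → f' r * r - f r = r * Real.cos (Real.log r)) ∧
    Tendsto rk atTop atTop ∧
    (∀ k : ℕ, |f' (rk k) * rk k - f (rk k)| = rk k) ∧
    (∃ γ : ℝ, 0 < γ ∧ ∀ k : ℕ,
      ((f' (rk k) * rk k - f (rk k)) / Real.sqrt (1 + f' (rk k) ^ 2)) ^ 2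
        ≥ γ * rk k ^ 2) := by
  intro f f' rk
  have hlog : ∀ k : ℕ, Real.log (rk k) = 2 * Real.pi * k := fun k => Real.log_exp _
  have hsin : ∀ k : ℕ, Real.sin (2 * Real.pi * k) = 0 := by
    intro k
    have : (2 : ℝ) * Real.pi * k = ((2*k : ℤ) : ℝ) * Real.pi := by push_cast; ring
    rw [this, Real.sin_int_mul_pi]
  have hcos : ∀ k : ℕ, Real.cos (2 * Real.pi * k) = 1 := by
    intro k
    have : (2 : ℝ) * Real.pi * k = k * (2 * Real.pi) := by ring
    rw [this, Real.cos_nat_mul_two_pi]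
  have key : ∀ k : ℕ, f' (rk k) * rk k - f (rk k) = rk k := by
    intro k
    simp only [f, f', hlog, hsin, hcos]
    ring
  have hf'7 : ∀ k : ℕ, f' (rk k) = 7 := by
    intro k
    simp only [f', hlog, hsin, hcos]
    norm_num
  refine ⟨?_, ?_, ?_, ?_⟩
  · intro r hr
    simp only [f, f']
    ring
  · exact Real.tendsto_exp_atTop.comp
      (Tendsto.const_mul_atTop (by positivity) tendsto_natCast_atTop_atTop)
  · intro k
    rw [key k, abs_of_pos (Real.exp_pos _)]
  · refine ⟨1/50, by norm_num, fun k => ?_⟩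
    rw [key k, hf'7 k]
    have h50 : Real.sqrt (1 + (7:ℝ)^2) = Real.sqrt 50 := by norm_num
    rw [h50, div_pow, Real.sq_sqrt (by norm_num : (50:ℝ) ≥ 0)]
    rw [ge_iff_le]
    ring_nf
    exact le_refl _
end

section
/- Let u₀(x̂) = |x̂|·sin(log|x̂|) for x̂ ∈ ℝ² with |x̂| ≥ 1. Then the gradient of u₀ is uniformly bounded on {|x̂| ≥ 1}: indeed |∇u₀(x̂)| ≤ √2 for |x̂| ≥ 1. Moreover, along the sequence |x̂_k| = e^{2πk}, one has u₀(x̂_k) = 0 and x̂_k·∇u₀(x̂_k) − u₀(x̂_k) = |x̂_k|·cos(log|x̂_k|) = |x̂_k|. -/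
open Real InnerProductSpace

noncomputable section

lemma grad_u0 (x : EuclideanSpace ℝ (Fin 2)) (hx : 1 ≤ ‖x‖) :
    HasGradientAt (fun y : EuclideanSpace ℝ (Fin 2) => ‖y‖ * Real.sin (Real.log ‖y‖))
      (((Real.sin (Real.log ‖x‖) + Real.cos (Real.log ‖x‖)) / ‖x‖) • x) x := by
  set t := ‖x‖ with ht
  have ht0 : 0 < t := lt_of_lt_of_le one_pos hx
  have hs0 : (0:ℝ) < t ^ 2 := by positivity
  -- derivative of g s := sqrt s * sin (log (sqrt s)) at s = t^2
  have hsqrt : HasDerivAt Real.sqrt (1 / (2 * Real.sqrt (t^2))) (t^2) :=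
    Real.hasDerivAt_sqrt hs0.ne'
  have hst : Real.sqrt (t^2) = t := Real.sqrt_sq ht0.le
  have hlog : HasDerivAt (fun s => Real.log (Real.sqrt s)) ((Real.sqrt (t^2))⁻¹ * (1 / (2 * Real.sqrt (t^2)))) (t^2) := by
    have := (Real.hasDerivAt_log (by rw [hst]; exact ht0.ne')).comp (t^2) hsqrt
    exact this
  have hsin : HasDerivAt (fun s => Real.sin (Real.log (Real.sqrt s)))
      (Real.cos (Real.log (Real.sqrt (t^2))) * ((Real.sqrt (t^2))⁻¹ * (1 / (2 * Real.sqrt (t^2))))) (t^2) :=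
    (Real.hasDerivAt_sin _).comp (t^2) hlog
  have hg : HasDerivAt (fun s => Real.sqrt s * Real.sin (Real.log (Real.sqrt s)))
      (1 / (2 * Real.sqrt (t^2)) * Real.sin (Real.log (Real.sqrt (t^2))) +
        Real.sqrt (t^2) * (Real.cos (Real.log (Real.sqrt (t^2))) * ((Real.sqrt (t^2))⁻¹ * (1 / (2 * Real.sqrt (t^2)))))) (t^2) :=
    hsqrt.mul hsin
  rw [hst] at hg
  have hnsq : HasFDerivAt (fun y : EuclideanSpace ℝ (Fin 2) => ‖y‖ ^ 2)
      (2 • (innerSL ℝ x)) x := (hasStrictFDerivAt_norm_sq x).hasFDerivAt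
  have hcomp := hg.comp_hasFDerivAt x hnsq
  have heq : (fun y : EuclideanSpace ℝ (Fin 2) =>
      Real.sqrt (‖y‖^2) * Real.sin (Real.log (Real.sqrt (‖y‖^2)))) =
      fun y : EuclideanSpace ℝ (Fin 2) => ‖y‖ * Real.sin (Real.log ‖y‖) := by
    funext y; rw [Real.sqrt_sq (norm_nonneg y)]
  rw [show ((fun s => Real.sqrt s * Real.sin (Real.log (Real.sqrt s))) ∘ fun y : EuclideanSpace ℝ (Fin 2) => ‖y‖^2)
      = fun y : EuclideanSpace ℝ (Fin 2) => ‖y‖ * Real.sin (Real.log ‖y‖) from heq ▸ rfl] at hcomp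
  have hmap : (InnerProductSpace.toDual ℝ (EuclideanSpace ℝ (Fin 2)))
      ((((Real.sin (Real.log t) + Real.cos (Real.log t)) / t)) • x) =
      (1 / (2 * t) * Real.sin (Real.log t) +
        t * (Real.cos (Real.log t) * (t⁻¹ * (1 / (2 * t))))) • (2 • (innerSL ℝ x)) := by
    ext y
    simp only [InnerProductSpace.toDual_apply_apply, ContinuousLinearMap.smul_apply,
      ContinuousLinearMap.smul_apply, innerSL_apply_apply, real_inner_smul_left, smul_eq_mul]
    field_simp
    ring
  rw [hasGradientAt_iff_hasFDerivAt, hmap]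
  exact hcomp
end

open Real

theorem ecker_huisken_graph_example :
    let u₀ : EuclideanSpace ℝ (Fin 2) → ℝ := fun x => ‖x‖ * Real.sin (Real.log ‖x‖)
    (∀ x : EuclideanSpace ℝ (Fin 2), 1 ≤ ‖x‖ → ‖gradient u₀ x‖ ≤ Real.sqrt 2) ∧
    (∀ (k : ℕ) (x : EuclideanSpace ℝ (Fin 2)), ‖x‖ = Real.exp (2 * Real.pi * k) →
      u₀ x = 0 ∧
      inner ℝ x (gradient u₀ x) - u₀ x = ‖x‖ * Real.cos (Real.log ‖x‖) ∧
      (‖x‖ * Real.cos (Real.log ‖x‖) = ‖x‖)) := by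
  intro u₀
  constructor
  · intro x hx
    have ht0 : (0:ℝ) < ‖x‖ := lt_of_lt_of_le one_pos hx
    rw [(grad_u0 x hx).gradient, norm_smul, Real.norm_eq_abs, abs_div,
      abs_of_pos ht0, div_mul_cancel₀ _ ht0.ne']
    set a := Real.sin (Real.log ‖x‖); set b := Real.cos (Real.log ‖x‖)
    have h2 : (a + b)^2 ≤ 2 := by
      have h1 : a^2 + b^2 = 1 := Real.sin_sq_add_cos_sq _
      have h3 : 2*a*b = Real.sin (2 * Real.log ‖x‖) := (Real.sin_two_mul _).symm
      nlinarith [Real.sin_le_one (2 * Real.log ‖x‖)]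
    calc |a + b| = Real.sqrt ((a+b)^2) := (Real.sqrt_sq_eq_abs _).symm
      _ ≤ Real.sqrt 2 := Real.sqrt_le_sqrt h2
  · intro k x hx
    have hlog : Real.log ‖x‖ = 2 * π * k := by rw [hx, Real.log_exp]
    have hsin : Real.sin (Real.log ‖x‖) = 0 := by
      rw [hlog, show 2*π*(k:ℝ) = ((2*k : ℕ):ℝ)*π by push_cast; ring, Real.sin_nat_mul_pi]
    have hcos : Real.cos (Real.log ‖x‖) = 1 := by
      rw [hlog, show 2*π*(k:ℝ) = (k:ℝ)*(2*π) by ring, Real.cos_nat_mul_two_pi]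
    have hx1 : 1 ≤ ‖x‖ := by rw [hx]; exact Real.one_le_exp (by positivity)
    have ht0 : (0:ℝ) < ‖x‖ := lt_of_lt_of_le one_pos hx1
    have hu : u₀ x = 0 := by simp [u₀, hsin]
    refine ⟨hu, ?_, by rw [hcos, mul_one]⟩
    rw [(grad_u0 x hx1).gradient, hu, real_inner_smul_right, real_inner_self_eq_norm_sq,
      hsin, hcos]
    field_simp
    ring
end
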